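/- arXiv:1308.4832 — 2 statements merged into one kernel-verified Lean document; each statement's English description precedes it below -/
import Mathlib

section
/- Let A be a finite-dimensional commutative unital ℝ-algebra whose trace form τ_A is positive definite (τ_A(a,a) > 0 for all a ≠ 0), and let L be a finite-dimensional real Lie algebra whose Killing form κ_L is negative definite (κ_L(x,x) < 0 for all x ≠ 0). Then the Killing form of the expanded Lie algebra A ⊗[ℝ] L is negative definite, i.e., κ_{A⊗L}(t,t) < 0 for every nonzero t ∈ A ⊗[ℝ] L. -/
open scoped TensorProduct
open LinearMap Module

noncomputable instance expandedLieAlgebra (k A L : Type*) [Field k] [CommRing A] [Algebra k A]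
    [LieRing L] [LieAlgebra k L] : LieAlgebra k (A ⊗[k] L) where
  lie_smul c x y := by
    rw [← algebraMap_smul A c y, lie_smul, algebraMap_smul]

section aux
variable (A L : Type*) [CommRing A] [Algebra ℝ A] [LieRing L] [LieAlgebra ℝ L]

lemma ad_tmul (a : A) (x : L) :
    LieAlgebra.ad ℝ (A ⊗[ℝ] L) (a ⊗ₜ x) =
      TensorProduct.map (LinearMap.mulLeft ℝ a) (LieAlgebra.ad ℝ L x) := by
  ext b y
  simp [LieAlgebra.ExtendScalars.bracket_tmul]

lemma killing_tmul [FiniteDimensional ℝ A] [FiniteDimensional ℝ L] (a b : A) (x y : L) :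
    killingForm ℝ (A ⊗[ℝ] L) (a ⊗ₜ x) (b ⊗ₜ y) =
      Algebra.traceForm ℝ A a b * killingForm ℝ L x y := by
  rw [killingForm_apply_apply, ad_tmul, ad_tmul, ← TensorProduct.map_comp,
      trace_tensorProduct', killingForm_apply_apply]
  congr 1
  rw [Algebra.traceForm_apply, Algebra.trace_apply, ← LinearMap.mulLeft_mul]
  rfl

variable {A L} in
lemma sum_coord_tmul [FiniteDimensional ℝ A] {ι : Type*} [Fintype ι] (e : Basis ι ℝ A)
    (t : A ⊗[ℝ] L) :
    ∑ i, e i ⊗ₜ[ℝ] (TensorProduct.lid ℝ L (TensorProduct.map (e.coord i) LinearMap.id t)) = t := by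
  induction t with
  | zero => simp
  | add u v hu hv =>
      simp only [map_add, TensorProduct.tmul_add, Finset.sum_add_distrib, hu, hv]
  | tmul a x =>
      simp only [TensorProduct.map_tmul, LinearMap.id_coe, id_eq, TensorProduct.lid_tmul]
      calc ∑ i, e i ⊗ₜ[ℝ] (e.coord i a • x) = ∑ i, (e.repr a i • e i) ⊗ₜ[ℝ] x := by
            simp [TensorProduct.smul_tmul, Basis.coord_apply]
        _ = a ⊗ₜ[ℝ] x := by rw [← TensorProduct.sum_tmul, Basis.sum_repr]
end aux

/-- If the trace form of `A` is positive definite and the Killing form of `L` is negative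
definite (`L` compact), then the Killing form of the expanded Lie algebra `A ⊗[ℝ] L` is negative
definite (the expansion is compact). -/
theorem killingForm_expansion_negDef
    (A L : Type*) [CommRing A] [Algebra ℝ A] [FiniteDimensional ℝ A]
    [LieRing L] [LieAlgebra ℝ L] [FiniteDimensional ℝ L]
    (hA : ∀ a : A, a ≠ 0 → 0 < Algebra.traceForm ℝ A a a)
    (hL : ∀ x : L, x ≠ 0 → killingForm ℝ L x x < 0) :
    ∀ t : A ⊗[ℝ] L, t ≠ 0 → killingForm ℝ (A ⊗[ℝ] L) t t < 0 := by
  haveI : Invertible (2 : ℝ) := invertibleOfNonzero two_ne_zero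
  obtain ⟨e, he⟩ := LinearMap.BilinForm.exists_orthogonal_basis
    (LinearMap.BilinForm.isSymm_iff.mp (Algebra.traceForm_isSymm (R := ℝ) (S := A)))
  intro t ht
  set x : Fin (finrank ℝ A) → L :=
    fun i => TensorProduct.lid ℝ L (TensorProduct.map (e.coord i) LinearMap.id t) with hx
  have hrepr : ∑ i, e i ⊗ₜ[ℝ] x i = t := sum_coord_tmul e t
  have hex : ∃ i, x i ≠ 0 := by
    by_contra h
    push_neg at h
    apply ht
    rw [← hrepr]
    simp [h]
  have key : killingForm ℝ (A ⊗[ℝ] L) t t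
      = ∑ i, Algebra.traceForm ℝ A (e i) (e i) * killingForm ℝ L (x i) (x i) := by
    conv_lhs => rw [← hrepr]
    rw [map_sum]
    refine Finset.sum_congr rfl fun i _ => ?_
    rw [LinearMap.map_sum₂]
    rw [Finset.sum_eq_single i]
    · exact killing_tmul A L _ _ _ _
    · intro j _ hj
      rw [killing_tmul, he hj, zero_mul]
    · simp
  rw [key]
  obtain ⟨i₀, hi₀⟩ := hex
  have hterm : ∀ i, Algebra.traceForm ℝ A (e i) (e i) * killingForm ℝ L (x i) (x i) ≤ 0 := by
    intro i
    rcases eq_or_ne (x i) 0 with h | h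
    · simp [h]
    · exact le_of_lt (mul_neg_of_pos_of_neg (hA _ (e.ne_zero i)) (hL _ h))
  calc ∑ i, Algebra.traceForm ℝ A (e i) (e i) * killingForm ℝ L (x i) (x i)
      < ∑ _i : Fin (finrank ℝ A), (0 : ℝ) := by
        refine Finset.sum_lt_sum (fun i _ => hterm i) ⟨i₀, Finset.mem_univ _, ?_⟩
        exact mul_neg_of_pos_of_neg (hA _ (e.ne_zero i₀)) (hL _ hi₀)
    _ = 0 := by simp
end

section
/- Let k be a field, A a commutative unital k-algebra, and L a Lie algebra over k. Then the image in A ⊗[k] L of A tensored with the radical of L (the k-submodule spanned by the pure tensors a ⊗ n with a ∈ A and n ∈ radical(L)) is contained in the radical of the expanded Lie algebra A ⊗[k] L. -/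
open scoped TensorProduct

section Aux

variable (k A L : Type*) [Field k] [CommRing A] [Algebra k A] [LieRing L] [LieAlgebra k L]

/-- Restrict scalars of a Lie ideal of `A ⊗[k] L` (over `A`) to a Lie ideal over `k`. -/
def lieIdealRestrict (J : LieIdeal A (A ⊗[k] L)) : LieIdeal k (A ⊗[k] L) where
  __ := Submodule.restrictScalars k J.toSubmodule
  lie_mem hx := J.lie_mem hx

variable {k A L}

lemma derived_le (n : ℕ) (J : LieIdeal k (A ⊗[k] L)) (J' : LieIdeal A (A ⊗[k] L))
    (h : J ≤ lieIdealRestrict k A L J') :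
    LieAlgebra.derivedSeriesOfIdeal k (A ⊗[k] L) n J ≤
      lieIdealRestrict k A L (LieAlgebra.derivedSeriesOfIdeal A (A ⊗[k] L) n J') := by
  induction n with
  | zero => simpa using h
  | succ n ih =>
    rw [LieAlgebra.derivedSeriesOfIdeal_succ, LieAlgebra.derivedSeriesOfIdeal_succ,
      LieSubmodule.lieIdeal_oper_eq_span, LieSubmodule.lieSpan_le]
    rintro m ⟨x, y, rfl⟩
    exact LieSubmodule.lie_mem_lie (ih x.2) (ih y.2)

lemma derived_baseChange (I : LieIdeal k L) (n : ℕ) :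
    LieAlgebra.derivedSeriesOfIdeal A (A ⊗[k] L) n (I.baseChange A) =
      (LieAlgebra.derivedSeriesOfIdeal k L n I).baseChange A := by
  induction n with
  | zero => simp
  | succ n ih =>
    rw [LieAlgebra.derivedSeriesOfIdeal_succ, LieAlgebra.derivedSeriesOfIdeal_succ, ih,
      LieSubmodule.lie_baseChange]

lemma solvable_restrict_baseChange (I : LieIdeal k L) [LieAlgebra.IsSolvable I] :
    LieAlgebra.IsSolvable (lieIdealRestrict k A L (I.baseChange A)) := by
  obtain ⟨n, hn⟩ := (LieAlgebra.isSolvable_iff (R := k) (L := I)).mp inferInstance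
  rw [LieIdeal.derivedSeries_eq_bot_iff] at hn
  refine (LieAlgebra.isSolvable_iff (R := k) (L := lieIdealRestrict k A L (I.baseChange A))).mpr ⟨n, ?_⟩
  rw [LieIdeal.derivedSeries_eq_bot_iff, eq_bot_iff]
  refine le_trans (derived_le n _ _ le_rfl) ?_
  rw [derived_baseChange, hn, LieSubmodule.baseChange_bot]
  intro x hx
  simpa using (show x ∈ (⊥ : LieIdeal A (A ⊗[k] L)) from hx)

lemma restrict_baseChange_le_radical (I : LieIdeal k L) (hI : LieAlgebra.IsSolvable I) :
    lieIdealRestrict k A L (I.baseChange A) ≤ LieAlgebra.radical k (A ⊗[k] L) := by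
  have := @solvable_restrict_baseChange k A L _ _ _ _ _ I hI
  exact le_sSup this

end Aux

/-- The image of `A ⊗ radical(L)` in the expanded Lie algebra `A ⊗[k] L` is contained in the
radical of `A ⊗[k] L`. -/
theorem expansion_of_radical_le_radical
    (k A L : Type*) [Field k] [CommRing A] [Algebra k A]
    [LieRing L] [LieAlgebra k L] :
    Submodule.span k {t : A ⊗[k] L | ∃ a n, n ∈ LieAlgebra.radical k L ∧ t = a ⊗ₜ[k] n}
      ≤ (LieAlgebra.radical k (A ⊗[k] L)).toSubmodule := by
  rw [Submodule.span_le]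
  rintro t ⟨a, n, hn, rfl⟩
  have key : ∀ I : LieIdeal k L, LieAlgebra.IsSolvable I →
      Submodule.map (TensorProduct.mk k A L a) I.toSubmodule
        ≤ (LieAlgebra.radical k (A ⊗[k] L)).toSubmodule := by
    intro I hI
    rintro _ ⟨m, hm, rfl⟩
    exact restrict_baseChange_le_radical I hI
      (LieSubmodule.tmul_mem_baseChange_of_mem a hm)
  have hn' : n ∈ (LieAlgebra.radical k L).toSubmodule := hn
  rw [LieAlgebra.radical, LieSubmodule.sSup_toSubmodule_eq_iSup] at hn'
  have hmem : a ⊗ₜ[k] n ∈ Submodule.map (TensorProduct.mk k A L a)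
      (⨆ I ∈ {I : LieIdeal k L | LieAlgebra.IsSolvable I}, (I : Submodule k L)) :=
    ⟨n, hn', rfl⟩
  simp_rw [Submodule.map_iSup] at hmem
  exact (iSup_le fun I => iSup_le fun hI => key I hI) hmem
end
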